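/- Let A_j, B_j (1 ≤ j ≤ n) be d×d positive definite complex matrices and let s, t satisfy either 1 ≥ t ≥ s > 1/2 or 0 ≤ t ≤ s < 1/2. Write S_u = Σ_{j=1}^n (A_j ♯_u B_j) for u ∈ [0,1] and G = Σ_{j=1}^n (A_j ♯ B_j). Then S_s ∘ S_{1−s} + ((t − s)/(s − 1/2)) · (S_s ∘ S_{1−s} − G ∘ G) ≤ S_t ∘ S_{1−t}, where ∘ is the Hadamard (entrywise) product and ≤ is the Loewner order. In particular (since the added term is positive semidefinite), S_s ∘ S_{1−s} ≤ S_t ∘ S_{1−t}. -/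

import Mathlib

open Matrix Kronecker
open scoped ComplexOrder

/-- Real power `A^r` of a positive definite matrix, via the (continuous)
functional calculus on selfadjoint matrices. -/
noncomputable def mpow {d : ℕ} (A : Matrix (Fin d) (Fin d) ℂ) (r : ℝ) :
    Matrix (Fin d) (Fin d) ℂ :=
  cfc (fun x : ℝ => x ^ r) A

/-- The weighted matrix geometric mean
`A ♯_μ B = A^{1/2}(A^{-1/2} B A^{-1/2})^μ A^{1/2}`. -/
noncomputable def mwgm {d : ℕ} (μ : ℝ) (A B : Matrix (Fin d) (Fin d) ℂ) :
    Matrix (Fin d) (Fin d) ℂ :=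
  mpow A (1/2) * mpow (mpow A (-(1/2)) * B * mpow A (-(1/2))) μ * mpow A (1/2)

section Scalar

open Real

private lemma expaff_convex (c₀ c₁ : ℝ) :
    ConvexOn ℝ Set.univ (fun u : ℝ => Real.exp (c₀ + c₁ * u)) := by
  refine ⟨convex_univ, fun u _ v _ a b ha hb hab => ?_⟩
  have key := convexOn_exp.2 (Set.mem_univ (c₀ + c₁ * u)) (Set.mem_univ (c₀ + c₁ * v)) ha hb hab
  simp only [smul_eq_mul] at key ⊢
  have h1 : c₀ + c₁ * (a * u + b * v) = a * (c₀ + c₁ * u) + b * (c₀ + c₁ * v) := by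
    linear_combination c₀ * hab.symm
  rw [h1]; exact key

private lemma g_convex {x y : ℝ} (hx : 0 < x) (hy : 0 < y) :
    ConvexOn ℝ Set.univ (fun u : ℝ => x ^ u * y ^ (1 - u) + x ^ (1 - u) * y ^ u) := by
  have hfun : (fun u : ℝ => x ^ u * y ^ (1 - u) + x ^ (1 - u) * y ^ u) =
      fun u : ℝ => Real.exp (Real.log y + (Real.log x - Real.log y) * u) +
        Real.exp (Real.log x + (Real.log y - Real.log x) * u) := by
    funext u
    rw [rpow_def_of_pos hx, rpow_def_of_pos hy, rpow_def_of_pos hx, rpow_def_of_pos hy,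
      ← Real.exp_add, ← Real.exp_add]
    ring_nf
  rw [hfun]
  exact (expaff_convex _ _).add (expaff_convex _ _)

private lemma slope_refine {g : ℝ → ℝ} (hconv : ConvexOn ℝ Set.univ g) {s t : ℝ}
    (hst : (1 ≥ t ∧ t ≥ s ∧ s > 1/2) ∨ (0 ≤ t ∧ t ≤ s ∧ s < 1/2)) :
    (t - s)/(s - 1/2) * (g s - g (1/2)) ≤ g t - g s := by
  rcases hst with ⟨h1, h2, h3⟩ | ⟨h1, h2, h3⟩
  · rcases eq_or_lt_of_le h2 with rfl | hlt
    · simp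
    · have key := hconv.slope_mono_adjacent (Set.mem_univ (1/2 : ℝ)) (Set.mem_univ t) h3 hlt
      have hts : 0 < t - s := by linarith
      have hs12 : 0 < s - 1/2 := by linarith
      rw [div_le_div_iff₀ hs12 hts] at key
      rw [div_mul_eq_mul_div, div_le_iff₀ hs12]
      nlinarith
  · rcases eq_or_lt_of_le h2 with rfl | hlt
    · simp
    · have key := hconv.slope_mono_adjacent (Set.mem_univ t) (Set.mem_univ (1/2 : ℝ)) hlt h3
      have hst' : 0 < s - t := by linarith
      have h12s : 0 < 1/2 - s := by linarith
      rw [div_le_div_iff₀ hst' h12s] at key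
      rw [div_mul_eq_mul_div, div_le_iff_of_neg (by linarith : s - 1/2 < 0)]
      nlinarith

private lemma c_nonneg {s t : ℝ}
    (hst : (1 ≥ t ∧ t ≥ s ∧ s > 1/2) ∨ (0 ≤ t ∧ t ≤ s ∧ s < 1/2)) :
    0 ≤ (t - s)/(s - 1/2) := by
  rw [div_nonneg_iff]
  rcases hst with ⟨h1, h2, h3⟩ | ⟨h1, h2, h3⟩
  · left; constructor <;> linarith
  · right; constructor <;> linarith

private lemma gs_ge_ghalf' {g : ℝ → ℝ} (hconv : ConvexOn ℝ Set.univ g)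
    (hsym : ∀ u, g (1 - u) = g u) (s : ℝ) : g (1/2) ≤ g s := by
  have key := hconv.2 (Set.mem_univ s) (Set.mem_univ (1 - s))
    (by norm_num : (0:ℝ) ≤ 1/2) (by norm_num : (0:ℝ) ≤ 1/2) (by norm_num)
  have hmid : (1/2 : ℝ) • s + (1/2 : ℝ) • (1 - s) = 1/2 := by
    simp only [smul_eq_mul]; ring
  rw [hmid, hsym s] at key
  simp only [smul_eq_mul] at key
  linarith

/-- combined scalar facts -/
private lemma scalar_all {x y s t : ℝ} (hx : 0 < x) (hy : 0 < y)
    (hst : (1 ≥ t ∧ t ≥ s ∧ s > 1/2) ∨ (0 ≤ t ∧ t ≤ s ∧ s < 1/2)) :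
    (t - s)/(s - 1/2) * ((x ^ s * y ^ (1-s) + x ^ (1-s) * y ^ s)
        - (x ^ (1/2:ℝ) * y ^ (1/2:ℝ) + x ^ (1/2:ℝ) * y ^ (1/2:ℝ)))
      ≤ (x ^ t * y ^ (1-t) + x ^ (1-t) * y ^ t) - (x ^ s * y ^ (1-s) + x ^ (1-s) * y ^ s)
    ∧ x ^ (1/2:ℝ) * y ^ (1/2:ℝ) + x ^ (1/2:ℝ) * y ^ (1/2:ℝ)
        ≤ x ^ s * y ^ (1-s) + x ^ (1-s) * y ^ s := by
  have hconv := g_convex hx hy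
  have h1 := slope_refine hconv hst
  have h2 := gs_ge_ghalf' hconv (fun u => by
    show x ^ (1-u) * y ^ (1 - (1-u)) + x ^ (1 - (1-u)) * y ^ (1-u)
        = x ^ u * y ^ (1 - u) + x ^ (1 - u) * y ^ u
    rw [show (1 - (1-u) : ℝ) = u by ring]
    ring) s
  rw [show ((1:ℝ) - 1/2) = 1/2 by norm_num] at h1 h2
  exact ⟨h1, h2⟩

end Scalar

section MatrixTools

variable {d : ℕ}

private lemma dot_expand (M : Matrix (Fin d) (Fin d) ℂ) (v : Fin d → ℂ) :
    star v ⬝ᵥ M *ᵥ v = ∑ i, ∑ j, star (v i) * M i j * v j := by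
  simp [dotProduct, mulVec, Finset.mul_sum, mul_assoc]

/-- Schur product theorem -/
private lemma posSemidef_hadamard {M N : Matrix (Fin d) (Fin d) ℂ}
    (hM : M.PosSemidef) (hN : N.PosSemidef) : (M.hadamard N).PosSemidef := by
  open scoped MatrixOrder in
  obtain ⟨P, hP⟩ := CStarAlgebra.nonneg_iff_eq_star_mul_self.mp hN.nonneg
  rw [star_eq_conjTranspose] at hP
  subst hP
  have hMapp : ∀ i j, star (M j i) = M i j := fun i j => by
    conv_rhs => rw [← hM.1]
    rw [conjTranspose_apply]
  refine PosSemidef.of_dotProduct_mulVec_nonneg ?_ ?_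
  · ext i j
    simp only [conjTranspose_apply, hadamard_apply, star_mul', mul_apply, star_sum, star_star]
    rw [hMapp]
    congr 1
    exact Finset.sum_congr rfl fun k _ => mul_comm _ _
  · intro x
    have key : star x ⬝ᵥ (M.hadamard (Pᴴ * P)) *ᵥ x
        = ∑ k, star (fun j => P k j * x j) ⬝ᵥ M *ᵥ (fun j => P k j * x j) := by
      simp only [dot_expand, hadamard_apply, mul_apply, conjTranspose_apply, Pi.star_apply,
        star_mul', Finset.mul_sum, Finset.sum_mul]
      conv_rhs => rw [Finset.sum_comm]
      refine Finset.sum_congr rfl fun i _ => ?_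
      rw [Finset.sum_comm]
      refine Finset.sum_congr rfl fun j _ => Finset.sum_congr rfl fun k _ => by ring
    rw [key]
    exact Finset.sum_nonneg fun k _ => hM.dotProduct_mulVec_nonneg _

private lemma posSemidef_smul_real {M : Matrix (Fin d) (Fin d) ℂ} (hM : M.PosSemidef)
    {r : ℝ} (hr : 0 ≤ r) : (r • M).PosSemidef := by
  refine PosSemidef.of_dotProduct_mulVec_nonneg ?_ ?_
  · show (r • M)ᴴ = r • M
    ext i j
    simp only [conjTranspose_apply, Matrix.smul_apply, star_smul, star_trivial]
    congr 1
    conv_rhs => rw [← hM.1]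
    rw [conjTranspose_apply]
  · intro x
    have key : star x ⬝ᵥ (r • M) *ᵥ x = (r : ℂ) * (star x ⬝ᵥ M *ᵥ x) := by
      rw [smul_mulVec, dotProduct_smul, Complex.real_smul]
    rw [key]
    refine mul_nonneg ?_ (hM.dotProduct_mulVec_nonneg x)
    exact_mod_cast hr

private lemma posSemidef_sum {ι : Type*} (s : Finset ι) (f : ι → Matrix (Fin d) (Fin d) ℂ)
    (hf : ∀ i ∈ s, (f i).PosSemidef) : (∑ i ∈ s, f i).PosSemidef := by
  classical
  induction s using Finset.induction_on with
  | empty => simpa using Matrix.PosSemidef.zero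
  | insert _ _ hnot ih =>
    rw [Finset.sum_insert hnot]
    exact ((hf _ (Finset.mem_insert_self _ _)).add
      (ih fun i hi => hf i (Finset.mem_insert_of_mem hi)))

private lemma posSemidef_vecMulVec (v : Fin d → ℂ) :
    (vecMulVec v (star v)).PosSemidef := by
  refine PosSemidef.of_dotProduct_mulVec_nonneg ?_ ?_
  · ext i j
    simp only [conjTranspose_apply, vecMulVec_apply, Pi.star_apply, star_mul', star_star]
    ring
  · intro x
    have key : star x ⬝ᵥ (vecMulVec v (star v)) *ᵥ x
        = (star x ⬝ᵥ v) * star (star x ⬝ᵥ v) := by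
      simp only [dotProduct, mulVec, vecMulVec_apply, Pi.star_apply, star_sum, star_mul',
        star_star, Finset.sum_mul, Finset.mul_sum]
      rw [Finset.sum_comm]
      refine Finset.sum_congr rfl fun i _ => Finset.sum_congr rfl fun j _ => by ring
    rw [key]
    exact mul_star_self_nonneg _

/-- the symmetrization machine -/
private lemma machine {ι : Type*} [Fintype ι] (w : ι → ι → ℝ)
    (R : ι → Matrix (Fin d) (Fin d) ℂ) (hR : ∀ p, (R p).PosSemidef)
    (hw : ∀ p q, 0 ≤ w p q + w q p) :
    (∑ p, ∑ q, w p q • (R p).hadamard (R q)).PosSemidef := by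
  have h1 : ∑ p, ∑ q, w q p • ((R p).hadamard (R q))
      = ∑ p, ∑ q, w p q • ((R p).hadamard (R q)) := by
    rw [Finset.sum_comm]
    exact Finset.sum_congr rfl fun p _ => Finset.sum_congr rfl fun q _ => by
      rw [hadamard_comm]
  have h2 : ∑ p, ∑ q, w p q • ((R p).hadamard (R q))
      = ∑ p, ∑ q, ((w p q + w q p)/2) • ((R p).hadamard (R q)) := by
    calc ∑ p, ∑ q, w p q • ((R p).hadamard (R q))
        = (2⁻¹ : ℝ) • (∑ p, ∑ q, w p q • ((R p).hadamard (R q))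
            + ∑ p, ∑ q, w q p • ((R p).hadamard (R q))) := by
          rw [h1, ← two_smul ℝ, smul_smul]
          norm_num
      _ = ∑ p, ∑ q, ((w p q + w q p)/2) • ((R p).hadamard (R q)) := by
          rw [← Finset.sum_add_distrib, Finset.smul_sum]
          refine Finset.sum_congr rfl fun p _ => ?_
          rw [← Finset.sum_add_distrib, Finset.smul_sum]
          refine Finset.sum_congr rfl fun q _ => ?_
          rw [← add_smul, smul_smul]
          congr 1
          ring
  rw [h2]
  refine posSemidef_sum _ _ fun p _ => posSemidef_sum _ _ fun q _ =>
    posSemidef_smul_real (posSemidef_hadamard (hR p) (hR q)) (by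
      have := hw p q
      linarith)

private lemma contOn (M : Matrix (Fin d) (Fin d) ℂ) (f : ℝ → ℝ) :
    ContinuousOn f (spectrum ℝ M) := by
  rw [continuousOn_iff_continuous_restrict]
  have : Finite (spectrum ℝ M) := M.finite_real_spectrum
  fun_prop

private lemma spectrum_pos {A : Matrix (Fin d) (Fin d) ℂ} (hA : A.PosDef) :
    ∀ x ∈ spectrum ℝ A, 0 < x := by
  intro x hx
  rw [hA.1.spectrum_real_eq_range_eigenvalues] at hx
  obtain ⟨i, rfl⟩ := hx
  exact hA.eigenvalues_pos i

private lemma mpow_isHermitian (A : Matrix (Fin d) (Fin d) ℂ) (r : ℝ) :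
    (mpow A r).IsHermitian := by
  have h : IsSelfAdjoint (mpow A r) := cfc_predicate _ A
  exact h

private lemma mpow_mul_mpow_neg_half {A : Matrix (Fin d) (Fin d) ℂ} (hA : A.PosDef) :
    mpow A (1/2) * mpow A (-(1/2)) = 1 := by
  have hsa : IsSelfAdjoint A := hA.1.isSelfAdjoint
  rw [mpow, mpow, ← cfc_mul _ _ A (contOn A _) (contOn A _)]
  have key : cfc (fun x : ℝ => x ^ (1/2:ℝ) * x ^ (-(1/2):ℝ)) A = cfc (1 : ℝ → ℝ) A := by
    apply cfc_congr
    intro x hx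
    have hx0 : 0 < x := spectrum_pos hA x hx
    simp [Pi.one_apply, ← Real.rpow_add hx0]
  rw [key, cfc_one ℝ A]

private lemma cfc_sum_form {C : Matrix (Fin d) (Fin d) ℂ} (hH : C.IsHermitian) (f : ℝ → ℝ) :
    hH.cfc f = ∑ i, f (hH.eigenvalues i) •
      vecMulVec (fun k => (hH.eigenvectorUnitary : Matrix (Fin d) (Fin d) ℂ) k i)
        (star fun k => (hH.eigenvectorUnitary : Matrix (Fin d) (Fin d) ℂ) k i) := by
  ext k l
  rw [Matrix.IsHermitian.cfc, Unitary.conjStarAlgAut_apply]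
  simp only [mul_apply, diagonal_apply, Function.comp_apply, Matrix.sum_apply, Matrix.smul_apply,
    vecMulVec_apply, Pi.star_apply, star_apply]
  refine Finset.sum_congr rfl fun m _ => ?_
  rw [Finset.sum_eq_single m (fun b _ hb => by simp [hb]) (by simp)]
  simp only [if_true, RCLike.real_smul_eq_coe_mul]
  ring

/-- decomposition of the weighted geometric mean as a positive combination -/
private lemma mwgm_decomp {A B : Matrix (Fin d) (Fin d) ℂ} (hA : A.PosDef) (hB : B.PosDef) :
    ∃ (lam : Fin d → ℝ) (R : Fin d → Matrix (Fin d) (Fin d) ℂ),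
      (∀ i, 0 < lam i) ∧ (∀ i, (R i).PosSemidef) ∧
      ∀ μ : ℝ, mwgm μ A B = ∑ i, (lam i ^ μ) • R i := by
  set S := mpow A (1/2) with hSdef
  set M := mpow A (-(1/2)) with hMdef
  have hSM : S * M = 1 := mpow_mul_mpow_neg_half hA
  have hSH : S.IsHermitian := mpow_isHermitian A _
  have hMH : M.IsHermitian := mpow_isHermitian A _
  set C := M * B * M with hCdef
  have hC : C.PosDef := by
    refine PosDef.of_dotProduct_mulVec_pos ?_ ?_
    · show Cᴴ = C
      rw [hCdef]
      simp only [conjTranspose_mul, hMH.eq, hB.1.eq, mul_assoc]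
    · intro x hx
      have hMx : M *ᵥ x ≠ 0 := by
        intro h0
        apply hx
        have hx' : (S * M) *ᵥ x = x := by rw [hSM, one_mulVec]
        rw [← hx', ← mulVec_mulVec, h0, mulVec_zero]
      have key : star x ⬝ᵥ C *ᵥ x = star (M *ᵥ x) ⬝ᵥ B *ᵥ (M *ᵥ x) := by
        rw [hCdef, star_mulVec, ← mulVec_mulVec, ← mulVec_mulVec, dotProduct_mulVec, hMH.eq]
      rw [key]
      exact hB.dotProduct_mulVec_pos hMx
  set U := (hC.1.eigenvectorUnitary : Matrix (Fin d) (Fin d) ℂ) with hUdef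
  refine ⟨fun i => hC.1.eigenvalues i,
    fun i => S * vecMulVec (fun k => U k i) (star fun k => U k i) * S,
    fun i => hC.eigenvalues_pos i, fun i => ?_, fun μ => ?_⟩
  · have h := (posSemidef_vecMulVec (fun k => U k i)).mul_mul_conjTranspose_same S
    rwa [hSH.eq] at h
  · have hform : mwgm μ A B = S * (hC.1.cfc fun x : ℝ => x ^ μ) * S := by
      rw [mwgm, ← Matrix.IsHermitian.cfc_eq]
      rfl
    rw [hform, cfc_sum_form hC.1 (fun x : ℝ => x ^ μ), Matrix.mul_sum, Matrix.sum_mul]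
    refine Finset.sum_congr rfl fun i _ => ?_
    rw [mul_smul_comm, smul_mul_assoc]

end MatrixTools

/-- Refinement of the Callebaut inequality for Hadamard products: writing
`S_u = Σ_j (A_j ♯_u B_j)` and `G = Σ_j (A_j ♯ B_j)`, if `1 ≥ t ≥ s > 1/2` or
`0 ≤ t ≤ s < 1/2`, then
`S_s ∘ S_{1−s} + ((t−s)/(s−1/2))(S_s ∘ S_{1−s} − G ∘ G) ≤ S_t ∘ S_{1−t}`, and in
particular `S_s ∘ S_{1−s} ≤ S_t ∘ S_{1−t}`, in the Loewner order. -/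
theorem callebaut_hadamard_refinement {d n : ℕ}
    (A B : Fin n → Matrix (Fin d) (Fin d) ℂ)
    (hA : ∀ j, (A j).PosDef) (hB : ∀ j, (B j).PosDef)
    (s t : ℝ)
    (hst : (1 ≥ t ∧ t ≥ s ∧ s > 1/2) ∨ (0 ≤ t ∧ t ≤ s ∧ s < 1/2)) :
    ((∑ j, mwgm t (A j) (B j)).hadamard (∑ j, mwgm (1 - t) (A j) (B j)) -
      ((∑ j, mwgm s (A j) (B j)).hadamard (∑ j, mwgm (1 - s) (A j) (B j)) +
        ((t - s) / (s - 1/2)) •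
          ((∑ j, mwgm s (A j) (B j)).hadamard (∑ j, mwgm (1 - s) (A j) (B j)) -
            (∑ j, mwgm (1/2) (A j) (B j)).hadamard
              (∑ j, mwgm (1/2) (A j) (B j))))).PosSemidef ∧
    ((∑ j, mwgm t (A j) (B j)).hadamard (∑ j, mwgm (1 - t) (A j) (B j)) -
      (∑ j, mwgm s (A j) (B j)).hadamard (∑ j, mwgm (1 - s) (A j) (B j))).PosSemidef := by
  classical
  choose lam R hlam hR hdecomp using fun j => mwgm_decomp (hA j) (hB j)
  have hhad : ∀ u v : ℝ, (∑ j, mwgm u (A j) (B j)).hadamard (∑ j, mwgm v (A j) (B j))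
      = ∑ p : Fin n × Fin d, ∑ q : Fin n × Fin d,
          (lam p.1 p.2 ^ u * lam q.1 q.2 ^ v) • ((R p.1 p.2).hadamard (R q.1 q.2)) := by
    have hsum : ∀ u : ℝ, ∑ j, mwgm u (A j) (B j)
        = ∑ p : Fin n × Fin d, (lam p.1 p.2 ^ u) • R p.1 p.2 := by
      intro u
      rw [Fintype.sum_prod_type]
      exact Finset.sum_congr rfl fun j _ => hdecomp j u
    intro u v
    rw [hsum u, hsum v]
    ext i j
    simp only [hadamard_apply, Matrix.sum_apply, Matrix.smul_apply]
    rw [Finset.sum_mul_sum]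
    refine Finset.sum_congr rfl fun p _ => Finset.sum_congr rfl fun q _ => ?_
    rw [Complex.real_smul, Complex.real_smul, Complex.real_smul, Complex.ofReal_mul]
    ring
  rw [hhad t (1-t), hhad s (1-s), hhad (1/2) (1/2)]
  set c := (t - s) / (s - 1/2) with hc
  have key := fun (p q : Fin n × Fin d) =>
    scalar_all (hlam p.1 p.2) (hlam q.1 q.2) hst (t := t) (s := s)
  constructor
  · have hcollect :
        (∑ p : Fin n × Fin d, ∑ q : Fin n × Fin d,
            (lam p.1 p.2 ^ t * lam q.1 q.2 ^ (1-t)) • ((R p.1 p.2).hadamard (R q.1 q.2)))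
          - ((∑ p : Fin n × Fin d, ∑ q : Fin n × Fin d,
            (lam p.1 p.2 ^ s * lam q.1 q.2 ^ (1-s)) • ((R p.1 p.2).hadamard (R q.1 q.2)))
            + c • ((∑ p : Fin n × Fin d, ∑ q : Fin n × Fin d,
            (lam p.1 p.2 ^ s * lam q.1 q.2 ^ (1-s)) • ((R p.1 p.2).hadamard (R q.1 q.2)))
              - (∑ p : Fin n × Fin d, ∑ q : Fin n × Fin d,
            (lam p.1 p.2 ^ (1/2:ℝ) * lam q.1 q.2 ^ (1/2:ℝ)) •
              ((R p.1 p.2).hadamard (R q.1 q.2)))))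
        = ∑ p : Fin n × Fin d, ∑ q : Fin n × Fin d,
            (lam p.1 p.2 ^ t * lam q.1 q.2 ^ (1-t)
              - (lam p.1 p.2 ^ s * lam q.1 q.2 ^ (1-s)
                + c * (lam p.1 p.2 ^ s * lam q.1 q.2 ^ (1-s)
                  - lam p.1 p.2 ^ (1/2:ℝ) * lam q.1 q.2 ^ (1/2:ℝ)))) •
              ((R p.1 p.2).hadamard (R q.1 q.2)) := by
      simp only [Finset.smul_sum, ← Finset.sum_sub_distrib, ← Finset.sum_add_distrib]
      refine Finset.sum_congr rfl fun p _ => Finset.sum_congr rfl fun q _ => ?_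
      module
    rw [hcollect]
    refine machine _ _ (fun p => hR p.1 p.2) fun p q => ?_
    have h1 := (key p q).1
    have h2 := (key q p).1
    nlinarith [h1, h2]
  · have hcollect2 :
        (∑ p : Fin n × Fin d, ∑ q : Fin n × Fin d,
            (lam p.1 p.2 ^ t * lam q.1 q.2 ^ (1-t)) • ((R p.1 p.2).hadamard (R q.1 q.2)))
          - (∑ p : Fin n × Fin d, ∑ q : Fin n × Fin d,
            (lam p.1 p.2 ^ s * lam q.1 q.2 ^ (1-s)) • ((R p.1 p.2).hadamard (R q.1 q.2)))
        = ∑ p : Fin n × Fin d, ∑ q : Fin n × Fin d,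
            (lam p.1 p.2 ^ t * lam q.1 q.2 ^ (1-t)
              - lam p.1 p.2 ^ s * lam q.1 q.2 ^ (1-s)) •
              ((R p.1 p.2).hadamard (R q.1 q.2)) := by
      simp only [← Finset.sum_sub_distrib]
      refine Finset.sum_congr rfl fun p _ => Finset.sum_congr rfl fun q _ => ?_
      module
    rw [hcollect2]
    refine machine _ _ (fun p => hR p.1 p.2) fun p q => ?_
    have h1 := (key p q).1
    have h2 := (key q p).1
    have h3 := (key p q).2
    have h4 := (key q p).2
    have hc0 : 0 ≤ c := c_nonneg hst
    nlinarith [h1, h2, h3, h4, hc0,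
      mul_nonneg hc0 (by nlinarith [h3] :
        (0:ℝ) ≤ lam p.1 p.2 ^ s * lam q.1 q.2 ^ (1-s) + lam p.1 p.2 ^ (1-s) * lam q.1 q.2 ^ s
          - (lam p.1 p.2 ^ (1/2:ℝ) * lam q.1 q.2 ^ (1/2:ℝ)
            + lam p.1 p.2 ^ (1/2:ℝ) * lam q.1 q.2 ^ (1/2:ℝ)))]
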